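/- arXiv:1410.0225 — 4 statements merged into one kernel-verified Lean document; each statement's English description precedes it below -/
import Mathlib

section
/- Let H be a Hilbert space, E a Banach space, and for t ∈ (0,1] let L_t : L²([0,t];H) → E be defined by restriction of a compact operator L₁ : L²([0,1];H) → E via L_t ψ = L₁(ψ·𝟙_{[0,t)}), where ψ is extended by zero to [0,1]. Then the operator norms ‖L_t‖ tend to 0 as t → 0. -/
open MeasureTheory
open scoped RealInnerProductSpace

/-- If L₁ : L²([0,1];H) → E is compact, then the norms of the restricted operators
L_t ψ = L₁(ψ·𝟙_{[0,t)}) (i.e. the norm of L₁ over the subspace of functions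
supported in [0,t)) tend to 0 as t → 0. -/
theorem norm_restricted_compact_operator_tendsto_zero
    {H E : Type*} [NormedAddCommGroup H] [InnerProductSpace ℝ H] [CompleteSpace H]
    [NormedAddCommGroup E] [NormedSpace ℝ E] [CompleteSpace E]
    (L₁ : Lp H 2 (volume.restrict (Set.Icc (0:ℝ) 1)) →L[ℝ] E)
    (hL₁ : IsCompactOperator L₁) :
    ∀ ε > (0:ℝ), ∃ δ > (0:ℝ), ∀ t : ℝ, 0 < t → t < δ →
      ∀ ψ : Lp H 2 (volume.restrict (Set.Icc (0:ℝ) 1)), ‖ψ‖ ≤ 1 →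
        (∀ᵐ s ∂(volume.restrict (Set.Icc (0:ℝ) 1)), t ≤ s → ψ s = 0) →
        ‖L₁ ψ‖ ≤ ε := by
  intro ε hε
  by_contra hcon
  push_neg at hcon
  choose t ht0 htlt ψ hψ1 hψ0 hψε using fun n : ℕ =>
    hcon (1 / (n + 1)) (by positivity)
  -- compactness setup
  obtain ⟨K, hK, hKm⟩ := hL₁
  rcases Metric.mem_nhds_iff.mp hKm with ⟨r, hr, hball⟩
  set v : ℕ → Lp H 2 (volume.restrict (Set.Icc (0:ℝ) 1)) :=
    fun n => (r / 2) • ψ n with hv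
  have hvmem : ∀ n, L₁ (v n) ∈ K := by
    intro n
    apply hball
    rw [Metric.mem_ball, dist_zero_right, hv]
    have : ‖(r / 2) • ψ n‖ = r / 2 * ‖ψ n‖ := by
      rw [norm_smul, Real.norm_eq_abs, abs_of_pos (by linarith)]
    rw [this]
    nlinarith [hψ1 n, norm_nonneg (ψ n)]
  obtain ⟨z, hzK, φ, hφ, hzt⟩ := hK.tendsto_subseq hvmem
  -- the limit is far from zero
  have hznorm : r / 2 * ε ≤ ‖z‖ := by
    apply ge_of_tendsto' hzt.norm
    intro n
    show r / 2 * ε ≤ ‖L₁ (v (φ n))‖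
    have heq : L₁ (v (φ n)) = (r / 2) • L₁ (ψ (φ n)) := by rw [hv]; simp
    rw [heq, norm_smul, Real.norm_eq_abs, abs_of_pos (by linarith : (0:ℝ) < r / 2)]
    have := hψε (φ n)
    nlinarith
  have hz0 : z ≠ 0 := by
    intro h
    rw [h, norm_zero] at hznorm
    nlinarith
  obtain ⟨f, hf1, hfz⟩ := exists_dual_vector ℝ z (norm_ne_zero_iff.mpr hz0)
  set F : Lp H 2 (volume.restrict (Set.Icc (0:ℝ) 1)) →L[ℝ] ℝ := f.comp L₁ with hF
  set g : Lp H 2 (volume.restrict (Set.Icc (0:ℝ) 1)) :=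
    (InnerProductSpace.toDual ℝ _).symm F with hg
  have hFg : ∀ x : Lp H 2 (volume.restrict (Set.Icc (0:ℝ) 1)), F x = ⟪g, x⟫ := fun x =>
    (InnerProductSpace.toDual_symm_apply).symm
  -- the bound sequence
  set b : ℕ → ℝ := fun n =>
    (eLpNorm ((Set.Iio (t n)).indicator (g : ℝ → H)) 2
      (volume.restrict (Set.Icc (0:ℝ) 1))).toReal with hb
  have hbound : ∀ n, ‖F (ψ n)‖ ≤ b n := by
    intro n
    have hgI : MemLp ((Set.Iio (t n)).indicator (g : ℝ → H)) 2
        (volume.restrict (Set.Icc (0:ℝ) 1)) :=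
      (Lp.memLp g).indicator measurableSet_Iio
    have h1 : ⟪g, ψ n⟫ = ⟪hgI.toLp _, ψ n⟫ := by
      rw [L2.inner_def, L2.inner_def]
      apply integral_congr_ae
      filter_upwards [hψ0 n, MemLp.coeFn_toLp hgI] with s hs hgs
      rw [hgs]
      by_cases h : s < t n
      · rw [Set.indicator_of_mem (Set.mem_Iio.mpr h)]
      · rw [hs (not_lt.mp h), Set.indicator_of_notMem (by simpa using h),
          inner_zero_right, inner_zero_right]
    have h2 : |⟪hgI.toLp _, ψ n⟫| ≤ ‖hgI.toLp _‖ * ‖ψ n‖ := abs_real_inner_le_norm _ _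
    have h3 : ‖hgI.toLp _‖ = b n := Lp.norm_toLp _ hgI
    rw [hFg, Real.norm_eq_abs, h1]
    calc |⟪hgI.toLp _, ψ n⟫| ≤ ‖hgI.toLp _‖ * ‖ψ n‖ := h2
      _ ≤ b n * 1 := by
          rw [h3]; exact mul_le_mul_of_nonneg_left (hψ1 n) ENNReal.toReal_nonneg
      _ = b n := mul_one _
  have hbtend : Filter.Tendsto b Filter.atTop (nhds 0) := by
    rw [NormedAddCommGroup.tendsto_nhds_zero]
    intro ε' hε'
    obtain ⟨η, hη, hind⟩ :=
      (Lp.memLp g).eLpNorm_indicator_le one_le_two ENNReal.ofNat_ne_top (half_pos hε')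
    obtain ⟨N, hN⟩ := exists_nat_one_div_lt hη
    rw [Filter.eventually_atTop]
    refine ⟨N, fun n hn => ?_⟩
    have hμs : (volume.restrict (Set.Icc (0:ℝ) 1)) (Set.Iio (t n)) ≤ ENNReal.ofReal η := by
      rw [Measure.restrict_apply measurableSet_Iio]
      have hsub : Set.Iio (t n) ∩ Set.Icc (0:ℝ) 1 ⊆ Set.Icc 0 (t n) := by
        rintro s ⟨hs1, hs2, _⟩
        exact ⟨hs2, le_of_lt hs1⟩
      calc volume (Set.Iio (t n) ∩ Set.Icc (0:ℝ) 1) ≤ volume (Set.Icc 0 (t n)) :=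
            measure_mono hsub
        _ = ENNReal.ofReal (t n) := by rw [Real.volume_Icc, sub_zero]
        _ ≤ ENNReal.ofReal η := by
            apply ENNReal.ofReal_le_ofReal
            have h1 : t n < 1 / (n + 1) := htlt n
            have h2 : (1:ℝ) / (n + 1) ≤ 1 / (N + 1) := by
              apply one_div_le_one_div_of_le (by positivity)
              have : (N:ℝ) ≤ n := Nat.cast_le.mpr hn
              linarith
            linarith
    have hle := hind (Set.Iio (t n)) measurableSet_Iio hμs
    rw [hb, Real.norm_eq_abs, abs_of_nonneg ENNReal.toReal_nonneg]
    calc (eLpNorm ((Set.Iio (t n)).indicator (g : ℝ → H)) 2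
          (volume.restrict (Set.Icc (0:ℝ) 1))).toReal
        ≤ (ENNReal.ofReal (ε' / 2)).toReal :=
          ENNReal.toReal_mono ENNReal.ofReal_ne_top hle
      _ = ε' / 2 := ENNReal.toReal_ofReal (by linarith)
      _ < ε' := by linarith
  have hw : Filter.Tendsto (fun n => F (ψ n)) Filter.atTop (nhds 0) :=
    squeeze_zero_norm hbound hbtend
  have hw' : Filter.Tendsto (fun n => F (v n)) Filter.atTop (nhds 0) := by
    have heq : ∀ n, F (v n) = (r / 2) * F (ψ n) := by
      intro n; rw [hv]; simp
    simp only [heq]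
    simpa using hw.const_mul (r / 2)
  have hsub : Filter.Tendsto (fun n => F (v (φ n))) Filter.atTop (nhds 0) :=
    hw'.comp hφ.tendsto_atTop
  have hsub' : Filter.Tendsto (fun n => F (v (φ n))) Filter.atTop (nhds (f z)) := by
    have : Filter.Tendsto (fun n => f (L₁ (v (φ n)))) Filter.atTop (nhds (f z)) :=
      (f.continuous.tendsto z).comp hzt
    exact this
  have hfz0 : f z = 0 := tendsto_nhds_unique hsub' hsub
  rw [hfz, RCLike.ofReal_eq_zero, norm_eq_zero] at hfz0
  exact hz0 hfz0
end

section
/- Let H be a Hilbert space with orthonormal basis (e_k), and define on H the diagonal operators Q e_k = k e_k and S(t) e_k = e^{-k²t} e_k. Then for every t > 0 the operator L_t ψ = ∫₀ᵗ S(s) Q ψ(s) ds is a bounded operator from L²([0,t];H) to H with operator norm ‖L_t‖ = 1/√2, independent of t. In particular ‖L_t‖ does not converge to 0 as t → 0. -/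
open MeasureTheory
open scoped ENNReal

/-- The operator L_t ψ = ∫₀ᵗ S(s) Q ψ(s) ds for the diagonal operators
Q e_k = k e_k, S(s) e_k = e^{-k²s} e_k, written out coordinatewise. -/
noncomputable def diagL {H : Type*} [NormedAddCommGroup H] [InnerProductSpace ℝ H]
    [CompleteSpace H] (e : HilbertBasis ℕ ℝ H) (t : ℝ) (ψ : ℝ → H) : H :=
  ∑' k : ℕ, (∫ s in Set.Ioc (0:ℝ) t,
      (k : ℝ) * Real.exp (-(k:ℝ)^2 * s) * (inner ℝ (e k) (ψ s) : ℝ)) • e k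

/- ### Auxiliary lemmas -/

lemma cs_integral {α : Type*} {m : MeasurableSpace α} (μ : Measure α) {f g : α → ℝ}
    (hf : MemLp f 2 μ) (hg : MemLp g 2 μ) :
    (∫ x, f x * g x ∂μ)^2 ≤ (∫ x, f x ^ 2 ∂μ) * (∫ x, g x ^ 2 ∂μ) := by
  have hf2 : Integrable (fun x => f x ^ 2) μ := hf.integrable_sq
  have hg2 : Integrable (fun x => g x ^ 2) μ := hg.integrable_sq
  have hfg : Integrable (fun x => f x * g x) μ := by
    refine Integrable.mono' ((hf2.add hg2).div_const 2)
      (hf.aestronglyMeasurable.mul hg.aestronglyMeasurable)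
      (Filter.Eventually.of_forall fun x => ?_)
    simp only [Pi.add_apply, Real.norm_eq_abs, abs_mul]
    nlinarith [sq_nonneg (|f x| - |g x|), abs_nonneg (f x), abs_nonneg (g x),
      sq_abs (f x), sq_abs (g x)]
  set A := ∫ x, f x ^ 2 ∂μ with hAdef
  set B := ∫ x, f x * g x ∂μ with hBdef
  set C := ∫ x, g x ^ 2 ∂μ with hCdef
  have hA : 0 ≤ A := integral_nonneg fun x => sq_nonneg _
  have hC : 0 ≤ C := integral_nonneg fun x => sq_nonneg _
  rcases eq_or_lt_of_le hC with hC0 | hCpos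
  · have hg0 : (fun x => g x ^ 2) =ᵐ[μ] 0 := by
      rw [← integral_eq_zero_iff_of_nonneg (fun x => sq_nonneg _) hg2]
      exact hC0.symm
    have hB0 : B = 0 := by
      have h : (fun x => f x * g x) =ᵐ[μ] 0 := by
        filter_upwards [hg0] with x hx
        have : g x = 0 := by simpa [pow_eq_zero_iff] using hx
        simp [this]
      rw [hBdef, integral_congr_ae h]
      simp
    rw [hB0, ← hC0]
    simp
  · have hexp : ∫ x, (f x - (B / C) * g x)^2 ∂μ
        = A - 2 * (B / C) * B + (B / C)^2 * C := by
      have h : ∀ x, (f x - (B / C) * g x)^2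
          = f x ^ 2 - (2 * (B / C)) * (f x * g x) + (B / C)^2 * g x ^ 2 := by
        intro x; ring
      simp_rw [h]
      have h1 : Integrable (fun x => f x ^ 2 - 2 * (B / C) * (f x * g x)) μ :=
        hf2.sub (hfg.const_mul _)
      have h2 : Integrable (fun x => (B / C)^2 * g x ^ 2) μ := hg2.const_mul _
      rw [integral_add h1 h2, integral_sub hf2 (hfg.const_mul _),
        integral_const_mul, integral_const_mul]
    have h0 : 0 ≤ ∫ x, (f x - (B / C) * g x)^2 ∂μ := integral_nonneg fun x => sq_nonneg _
    rw [hexp] at h0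
    have heq : A - 2 * (B / C) * B + (B / C)^2 * C = A - B^2 / C := by
      field_simp
      ring
    rw [heq] at h0
    have hdiv : B^2 / C ≤ A := by linarith
    have := (div_le_iff₀ hCpos).mp hdiv
    linarith

lemma integral_Ioc_exp_neg (c t : ℝ) (hc : 0 < c) (ht : 0 ≤ t) :
    ∫ s in Set.Ioc (0:ℝ) t, Real.exp (-(c * s)) = (1 - Real.exp (-(c * t))) / c := by
  rw [← intervalIntegral.integral_of_le ht]
  have hderiv : ∀ x ∈ Set.uIcc (0:ℝ) t,
      HasDerivAt (fun u => -(Real.exp (-(c * u)) / c)) (Real.exp (-(c * x))) x := by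
    intro x _
    have h1 : HasDerivAt (fun u : ℝ => -(c * u)) (-c) x := by
      simpa using ((hasDerivAt_id x).const_mul c).fun_neg
    have h2 := (h1.exp.div_const c).fun_neg
    exact h2.congr_deriv (by rw [mul_neg, neg_div, neg_neg, mul_div_assoc, div_self hc.ne', mul_one])
  have hint : IntervalIntegrable (fun s => Real.exp (-(c * s))) volume 0 t :=
    (Real.continuous_exp.comp (continuous_const.mul continuous_id).neg).intervalIntegrable 0 t
  rw [intervalIntegral.integral_eq_sub_of_hasDerivAt hderiv hint]
  simp [Real.exp_zero]
  ring

noncomputable def Mc (k : ℕ) (t : ℝ) : ℝ := (1 - Real.exp (-(2 * (k:ℝ)^2 * t))) / 2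

lemma Jk_eq (k : ℕ) (hk : 1 ≤ k) (t : ℝ) (ht : 0 ≤ t) :
    ∫ s in Set.Ioc (0:ℝ) t, ((k:ℝ) * Real.exp (-(k:ℝ)^2 * s))^2 = Mc k t := by
  have hk1 : (1:ℝ) ≤ (k:ℝ) := by exact_mod_cast hk
  have hc : 0 < 2 * (k:ℝ)^2 := by nlinarith
  have hcong : ∀ s : ℝ, ((k:ℝ) * Real.exp (-(k:ℝ)^2 * s))^2
      = (k:ℝ)^2 * Real.exp (-(2 * (k:ℝ)^2 * s)) := by
    intro s
    rw [mul_pow, sq (Real.exp _), ← Real.exp_add]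
    ring_nf
  simp_rw [hcong]
  rw [integral_const_mul, integral_Ioc_exp_neg _ _ hc ht]
  rw [Mc]
  have hk0 : (k:ℝ)^2 ≠ 0 := by nlinarith
  field_simp

lemma norm_tsum_sq {H : Type*} [NormedAddCommGroup H] [InnerProductSpace ℝ H]
    [CompleteSpace H] (e : HilbertBasis ℕ ℝ H) (a : ℕ → ℝ)
    (ha : Summable fun k => a k ^ 2) :
    ‖∑' k, a k • (e k : H)‖ ^ 2 = ∑' k, a k ^ 2 := by
  have h2 : ((2:ℝ≥0∞)).toReal = (2:ℝ) := by simp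
  have hs : Summable fun k => ‖a k‖ ^ ((2:ℝ≥0∞)).toReal := by
    rw [h2]
    convert ha using 2 with k
    rw [show (2:ℝ) = ((2:ℕ):ℝ) by norm_num, Real.rpow_natCast]
    simp [Real.norm_eq_abs, sq_abs]
  have hmem : Memℓp a 2 := memℓp_gen hs
  set f : lp (fun _ : ℕ => ℝ) 2 := ⟨a, hmem⟩ with hf
  have hsum := e.hasSum_repr_symm f
  have hfa : ∀ k, (f : ∀ _ : ℕ, ℝ) k = a k := fun k => rfl
  have htsum : ∑' k, a k • (e k : H) = e.repr.symm f := by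
    exact hsum.tsum_eq
  rw [htsum]
  have hnorm : ‖(e.repr.symm f : H)‖ = ‖f‖ := e.repr.symm.norm_map f
  rw [hnorm]
  have := lp.norm_rpow_eq_tsum (p := 2) (by norm_num) f
  have h22 : ‖f‖ ^ (2:ℝ) = ∑' k, ‖a k‖ ^ (2:ℝ) := by
    simpa [h2] using this
  calc ‖f‖ ^ 2 = ‖f‖ ^ (2:ℝ) := by
        rw [show (2:ℝ) = ((2:ℕ):ℝ) by norm_num, Real.rpow_natCast]
    _ = ∑' k, ‖a k‖ ^ (2:ℝ) := h22
    _ = ∑' k, a k ^ 2 := by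
        congr 1; funext k
        rw [show (2:ℝ) = ((2:ℕ):ℝ) by norm_num, Real.rpow_natCast]
        simp [Real.norm_eq_abs, sq_abs]

lemma restrict_finite (t : ℝ) : IsFiniteMeasure (volume.restrict (Set.Ioc (0:ℝ) t)) := by
  constructor
  rw [Measure.restrict_apply_univ]
  simp [Real.volume_Ioc, ENNReal.ofReal_lt_top]

lemma gk_memℒp (k : ℕ) (t : ℝ) :
    MemLp (fun s => (k:ℝ) * Real.exp (-(k:ℝ)^2 * s)) 2
      (volume.restrict (Set.Ioc (0:ℝ) t)) := by
  have := restrict_finite t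
  refine MemLp.of_bound ?_ (k:ℝ) ?_
  · exact ((continuous_const.mul (Real.continuous_exp.comp
      (continuous_const.mul continuous_id))).aestronglyMeasurable)
  · rw [ae_restrict_iff' measurableSet_Ioc]
    filter_upwards with s hs
    have h1 : Real.exp (-(k:ℝ)^2 * s) ≤ 1 := by
      rw [Real.exp_le_one_iff]
      have : (0:ℝ) ≤ (k:ℝ)^2 * s := mul_nonneg (sq_nonneg _) hs.1.le
      linarith
    have h2 : 0 < Real.exp (-(k:ℝ)^2 * s) := Real.exp_pos _
    rw [Real.norm_eq_abs, abs_mul, Nat.abs_cast, abs_of_pos h2]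
    calc (k:ℝ) * Real.exp (-(k:ℝ)^2 * s) ≤ (k:ℝ) * 1 := by
          exact mul_le_mul_of_nonneg_left h1 (Nat.cast_nonneg k)
      _ = (k:ℝ) := mul_one _

lemma part1 {H : Type*} [NormedAddCommGroup H] [InnerProductSpace ℝ H] [CompleteSpace H]
    (e : HilbertBasis ℕ ℝ H) {t : ℝ} (ht : 0 < t) (ψ : ℝ → H)
    (hψ : MemLp ψ 2 (volume.restrict (Set.Ioc (0:ℝ) t))) :
    ‖diagL e t ψ‖ ≤ (Real.sqrt 2)⁻¹ * Real.sqrt (∫ s in Set.Ioc (0:ℝ) t, ‖ψ s‖^2) := by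
  set μ := volume.restrict (Set.Ioc (0:ℝ) t) with hμ
  have := restrict_finite t
  set gk : ℕ → ℝ → ℝ := fun k s => (k:ℝ) * Real.exp (-(k:ℝ)^2 * s) with hgk_def
  set ck : ℕ → ℝ → ℝ := fun k s => (inner ℝ (e k) (ψ s) : ℝ) with hck_def
  set a : ℕ → ℝ := fun k => ∫ s, gk k s * ck k s ∂μ with ha_def
  have hdiag : diagL e t ψ = ∑' k, a k • (e k : H) := rfl
  have hgk : ∀ k, MemLp (gk k) 2 μ := fun k => gk_memℒp k t
  have hck : ∀ k, MemLp (ck k) 2 μ := fun k => hψ.const_inner (e k)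
  set I : ℕ → ℝ := fun k => ∫ s, ck k s ^ 2 ∂μ with hI_def
  have hI0 : ∀ k, 0 ≤ I k := fun k => integral_nonneg fun s => sq_nonneg _
  have hJ : ∀ k, (∫ s, gk k s ^ 2 ∂μ) ≤ 1/2 := by
    intro k
    rcases Nat.eq_zero_or_pos k with hk | hk
    · subst hk; simp [hgk_def]
    · rw [hμ, show (∫ s in Set.Ioc (0:ℝ) t, gk k s ^ 2)
          = ∫ s in Set.Ioc (0:ℝ) t, ((k:ℝ) * Real.exp (-(k:ℝ)^2 * s))^2 from rfl,
        Jk_eq k hk t ht.le, Mc]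
      have := Real.exp_nonneg (-(2 * (k:ℝ)^2 * t))
      linarith
  have hak : ∀ k, a k ^ 2 ≤ (1/2) * I k := by
    intro k
    calc a k ^ 2 ≤ (∫ s, gk k s ^ 2 ∂μ) * I k := cs_integral μ (hgk k) (hck k)
      _ ≤ (1/2) * I k := mul_le_mul_of_nonneg_right (hJ k) (hI0 k)
  have hψn : Integrable (fun s => ‖ψ s‖^2) μ :=
    (memLp_two_iff_integrable_sq_norm hψ.aestronglyMeasurable).mp hψ
  have hpartial : ∀ n : ℕ, ∑ k ∈ Finset.range n, I k ≤ ∫ s, ‖ψ s‖^2 ∂μ := by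
    intro n
    rw [hI_def, ← integral_finset_sum _ (fun k _ => (hck k).integrable_sq)]
    refine integral_mono (integrable_finset_sum _ fun k _ => (hck k).integrable_sq) hψn ?_
    intro s
    have := e.orthonormal.sum_inner_products_le (s := Finset.range n) (ψ s)
    simpa [Real.norm_eq_abs, sq_abs] using this
  have hIsum : Summable I := summable_of_sum_range_le hI0 hpartial
  have haSum : Summable (fun k => a k ^ 2) :=
    Summable.of_nonneg_of_le (fun k => sq_nonneg _) hak (hIsum.mul_left _)
  have hbound : ∑' k, a k ^ 2 ≤ (1/2) * ∫ s, ‖ψ s‖^2 ∂μ := by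
    calc ∑' k, a k ^ 2 ≤ ∑' k, (1/2) * I k := Summable.tsum_le_tsum hak haSum (hIsum.mul_left _)
      _ = (1/2) * ∑' k, I k := tsum_mul_left
      _ ≤ (1/2) * ∫ s, ‖ψ s‖^2 ∂μ := by
          refine mul_le_mul_of_nonneg_left ?_ (by norm_num)
          exact Real.tsum_le_of_sum_range_le hI0 hpartial
  have hA : 0 ≤ ∫ s, ‖ψ s‖^2 ∂μ := integral_nonneg fun s => sq_nonneg _
  have hn2 : ‖diagL e t ψ‖ ^ 2 ≤ (∫ s, ‖ψ s‖^2 ∂μ) / 2 := by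
    rw [hdiag, norm_tsum_sq e a haSum]
    linarith
  have hs := Real.sqrt_le_sqrt hn2
  rw [Real.sqrt_sq (norm_nonneg _)] at hs
  calc ‖diagL e t ψ‖ ≤ Real.sqrt ((∫ s, ‖ψ s‖^2 ∂μ) / 2) := hs
    _ = (Real.sqrt 2)⁻¹ * Real.sqrt (∫ s, ‖ψ s‖^2 ∂μ) := by
        rw [Real.sqrt_div hA 2, div_eq_mul_inv, mul_comm]

lemma Mc_pos (k : ℕ) (hk : 1 ≤ k) {t : ℝ} (ht : 0 < t) : 0 < Mc k t := by
  have hk1 : (1:ℝ) ≤ (k:ℝ) := by exact_mod_cast hk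
  have : Real.exp (-(2 * (k:ℝ)^2 * t)) < 1 := by
    rw [Real.exp_lt_one_iff]
    nlinarith [mul_pos (mul_pos (by norm_num : (0:ℝ) < 2)
      (by nlinarith : (0:ℝ) < (k:ℝ)^2)) ht]
  rw [Mc]; linarith

lemma diagL_single {H : Type*} [NormedAddCommGroup H] [InnerProductSpace ℝ H]
    [CompleteSpace H] (e : HilbertBasis ℕ ℝ H) {t : ℝ} (ht : 0 < t) (k : ℕ) (hk : 1 ≤ k)
    (c : ℝ) :
    diagL e t (fun s => (c * ((k:ℝ) * Real.exp (-(k:ℝ)^2 * s))) • e k)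
      = (c * Mc k t) • (e k : H) := by
  classical
  have hortho : ∀ i j : ℕ, (inner ℝ (e i) (e j : H) : ℝ) = if i = j then 1 else 0 :=
    fun i j => orthonormal_iff_ite.mp e.orthonormal i j
  rw [diagL]
  rw [tsum_eq_single k ?_]
  · congr 1
    have hcong : ∀ s : ℝ, (k:ℝ) * Real.exp (-(k:ℝ)^2 * s) *
        (inner ℝ (e k) ((c * ((k:ℝ) * Real.exp (-(k:ℝ)^2 * s))) • (e k : H)) : ℝ)
        = c * ((k:ℝ) * Real.exp (-(k:ℝ)^2 * s))^2 := by
      intro s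
      rw [real_inner_smul_right, hortho k k]
      simp
      ring
    simp_rw [hcong]
    rw [integral_const_mul, Jk_eq k hk t ht.le]
  · intro j hjk
    have hcong : ∀ s : ℝ, (j:ℝ) * Real.exp (-(j:ℝ)^2 * s) *
        (inner ℝ (e j) ((c * ((k:ℝ) * Real.exp (-(k:ℝ)^2 * s))) • (e k : H)) : ℝ) = 0 := by
      intro s
      rw [real_inner_smul_right, hortho j k, if_neg hjk]
      ring
    simp_rw [hcong]
    simp

lemma mem_S {H : Type*} [NormedAddCommGroup H] [InnerProductSpace ℝ H] [CompleteSpace H]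
    (e : HilbertBasis ℕ ℝ H) {t : ℝ} (ht : 0 < t) (k : ℕ) (hk : 1 ≤ k) :
    Real.sqrt (Mc k t) ∈ {r : ℝ | ∃ ψ : ℝ → H,
        MemLp ψ 2 (volume.restrict (Set.Ioc (0:ℝ) t)) ∧
        (∫ s in Set.Ioc (0:ℝ) t, ‖ψ s‖^2) ≤ 1 ∧
        r = ‖diagL e t ψ‖} := by
  have hM : 0 < Mc k t := Mc_pos k hk ht
  set M := Mc k t with hMdef
  set c : ℝ := (Real.sqrt M)⁻¹ with hcdef
  have hsq : 0 < Real.sqrt M := Real.sqrt_pos.mpr hM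
  have hc : 0 < c := inv_pos.mpr hsq
  refine ⟨fun s => (c * ((k:ℝ) * Real.exp (-(k:ℝ)^2 * s))) • e k, ?_, ?_, ?_⟩
  · have := restrict_finite t
    refine MemLp.of_bound ?_ (c * (k:ℝ)) ?_
    · exact ((continuous_const.mul (continuous_const.mul (Real.continuous_exp.comp
        (continuous_const.mul continuous_id)))).smul continuous_const).aestronglyMeasurable
    · rw [ae_restrict_iff' measurableSet_Ioc]
      filter_upwards with s hs
      have h1 : Real.exp (-(k:ℝ)^2 * s) ≤ 1 := by
        rw [Real.exp_le_one_iff]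
        have : (0:ℝ) ≤ (k:ℝ)^2 * s := mul_nonneg (sq_nonneg _) hs.1.le
        linarith
      have h2 : 0 < Real.exp (-(k:ℝ)^2 * s) := Real.exp_pos _
      rw [norm_smul, e.orthonormal.1 k, mul_one, Real.norm_eq_abs, abs_mul, abs_mul,
        Nat.abs_cast, abs_of_pos hc, abs_of_pos h2]
      have : (k:ℝ) * Real.exp (-(k:ℝ)^2 * s) ≤ (k:ℝ) * 1 :=
        mul_le_mul_of_nonneg_left h1 (Nat.cast_nonneg k)
      nlinarith
  · have hcong : ∀ s : ℝ, ‖(c * ((k:ℝ) * Real.exp (-(k:ℝ)^2 * s))) • (e k : H)‖^2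
        = c^2 * ((k:ℝ) * Real.exp (-(k:ℝ)^2 * s))^2 := by
      intro s
      rw [norm_smul, e.orthonormal.1 k, mul_one, Real.norm_eq_abs, mul_pow, sq_abs]
      ring
    simp_rw [hcong]
    rw [integral_const_mul, Jk_eq k hk t ht.le, ← hMdef]
    have hc2 : c^2 = M⁻¹ := by
      rw [hcdef, ← Real.sq_sqrt hM.le]
      simp [pow_two]
    rw [hc2, inv_mul_cancel₀ hM.ne']
  · rw [diagL_single e ht k hk c, norm_smul, e.orthonormal.1 k, mul_one, Real.norm_eq_abs,
      abs_of_pos (mul_pos hc hM)]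
    rw [hcdef, inv_mul_eq_div, eq_div_iff hsq.ne', Real.mul_self_sqrt hM.le]

/-- For every t > 0 the operator L_t is bounded from L²([0,t];H) to H with
operator norm exactly 1/√2; in particular the norms do not tend to 0 as t → 0. -/
theorem diag_operator_norm_eq_inv_sqrt_two
    {H : Type*} [NormedAddCommGroup H] [InnerProductSpace ℝ H] [CompleteSpace H]
    (e : HilbertBasis ℕ ℝ H) :
    (∀ t : ℝ, 0 < t → ∀ ψ : ℝ → H,
        MemLp ψ 2 (volume.restrict (Set.Ioc (0:ℝ) t)) →
        ‖diagL e t ψ‖ ≤ (Real.sqrt 2)⁻¹ *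
          Real.sqrt (∫ s in Set.Ioc (0:ℝ) t, ‖ψ s‖^2)) ∧
    (∀ t : ℝ, 0 < t →
      IsLUB {r : ℝ | ∃ ψ : ℝ → H,
          MemLp ψ 2 (volume.restrict (Set.Ioc (0:ℝ) t)) ∧
          (∫ s in Set.Ioc (0:ℝ) t, ‖ψ s‖^2) ≤ 1 ∧
          r = ‖diagL e t ψ‖} ((Real.sqrt 2)⁻¹)) ∧
    ¬ Filter.Tendsto (fun t : ℝ =>
        sSup {r : ℝ | ∃ ψ : ℝ → H,
          MemLp ψ 2 (volume.restrict (Set.Ioc (0:ℝ) t)) ∧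
          (∫ s in Set.Ioc (0:ℝ) t, ‖ψ s‖^2) ≤ 1 ∧
          r = ‖diagL e t ψ‖})
      (nhdsWithin 0 (Set.Ioi 0)) (nhds 0) := by
  have hLUB : ∀ t : ℝ, 0 < t →
      IsLUB {r : ℝ | ∃ ψ : ℝ → H,
          MemLp ψ 2 (volume.restrict (Set.Ioc (0:ℝ) t)) ∧
          (∫ s in Set.Ioc (0:ℝ) t, ‖ψ s‖^2) ≤ 1 ∧
          r = ‖diagL e t ψ‖} ((Real.sqrt 2)⁻¹) := by
    intro t ht
    constructor
    · rintro r ⟨ψ, hψ, hint, rfl⟩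
      calc ‖diagL e t ψ‖
          ≤ (Real.sqrt 2)⁻¹ * Real.sqrt (∫ s in Set.Ioc (0:ℝ) t, ‖ψ s‖^2) :=
            part1 e ht ψ hψ
        _ ≤ (Real.sqrt 2)⁻¹ * 1 := by
            refine mul_le_mul_of_nonneg_left ?_ (inv_nonneg.mpr (Real.sqrt_nonneg 2))
            exact Real.sqrt_le_one.mpr hint
        _ = (Real.sqrt 2)⁻¹ := mul_one _
    · intro b hb
      have hmem : ∀ k : ℕ, 1 ≤ k → Real.sqrt (Mc k t) ≤ b := fun k hk =>
        hb (mem_S e ht k hk)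
      have hpow : Filter.Tendsto (fun x : ℝ => 2 * x^2 * t) Filter.atTop Filter.atTop := by
        exact ((Filter.tendsto_pow_atTop two_ne_zero).const_mul_atTop
          (by norm_num : (0:ℝ) < 2)).atTop_mul_const ht
      have h1 : Filter.Tendsto (fun k : ℕ => Real.exp (-(2 * (k:ℝ)^2 * t)))
          Filter.atTop (nhds 0) := by
        exact Real.tendsto_exp_atBot.comp
          (Filter.Tendsto.comp Filter.tendsto_neg_atTop_atBot
            (hpow.comp tendsto_natCast_atTop_atTop))
      have hMlim : Filter.Tendsto (fun k : ℕ => Mc k t) Filter.atTop (nhds (1/2)) := by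
        have := (Filter.Tendsto.sub (tendsto_const_nhds (x := (1:ℝ))) h1).div_const 2
        simpa [Mc] using this
      have hsqlim : Filter.Tendsto (fun k : ℕ => Real.sqrt (Mc k t)) Filter.atTop
          (nhds ((Real.sqrt 2)⁻¹)) := by
        have := (Real.continuous_sqrt.continuousAt.tendsto).comp hMlim
        simpa [one_div, Real.sqrt_inv, Function.comp_def] using this
      exact le_of_tendsto hsqlim (Filter.eventually_atTop.mpr ⟨1, hmem⟩)
  refine ⟨fun t ht ψ hψ => part1 e ht ψ hψ, hLUB, ?_⟩
  intro hT
  have hne : ∀ t : ℝ, 0 < t → {r : ℝ | ∃ ψ : ℝ → H,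
      MemLp ψ 2 (volume.restrict (Set.Ioc (0:ℝ) t)) ∧
      (∫ s in Set.Ioc (0:ℝ) t, ‖ψ s‖^2) ≤ 1 ∧
      r = ‖diagL e t ψ‖}.Nonempty := by
    intro t ht
    have := restrict_finite t
    exact ⟨_, fun _ => (0:H), memLp_const 0, by simp, rfl⟩
  have heq : ∀ᶠ t : ℝ in nhdsWithin 0 (Set.Ioi 0),
      sSup {r : ℝ | ∃ ψ : ℝ → H,
        MemLp ψ 2 (volume.restrict (Set.Ioc (0:ℝ) t)) ∧
        (∫ s in Set.Ioc (0:ℝ) t, ‖ψ s‖^2) ≤ 1 ∧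
        r = ‖diagL e t ψ‖} = (Real.sqrt 2)⁻¹ := by
    filter_upwards [self_mem_nhdsWithin] with t ht
    exact IsLUB.csSup_eq (hLUB t ht) (hne t ht)
  have hconst : Filter.Tendsto (fun _ : ℝ => (Real.sqrt 2)⁻¹)
      (nhdsWithin 0 (Set.Ioi 0)) (nhds 0) := Filter.Tendsto.congr' heq hT
  have h0 : (Real.sqrt 2)⁻¹ = (0:ℝ) :=
    tendsto_nhds_unique tendsto_const_nhds hconst
  have : (0:ℝ) < (Real.sqrt 2)⁻¹ := by positivity
  linarith
end

section
/- Let u : [0,∞) → [0,∞) be differentiable and satisfy u'(t) ≤ -λ u(t)^m + φ(t)^m for all t ≥ 0, where λ > 0, m ≥ 1 is an integer, and φ : [0,∞) → [0,∞) is continuous and nondecreasing. Then u(t) ≤ u(0) + 2 λ^{-1/m} φ(t) for all t ≥ 0. -/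
/-- If u ≥ 0 is differentiable with u' ≤ -λ uᵐ + φᵐ, where φ ≥ 0 is continuous
and nondecreasing, then u(t) ≤ u(0) + 2 λ^{-1/m} φ(t). -/
theorem ode_power_comparison
    (u φ : ℝ → ℝ) (u' : ℝ → ℝ) (lam : ℝ) (m : ℕ)
    (hlam : 0 < lam) (hm : 1 ≤ m)
    (hu_nonneg : ∀ t, 0 ≤ t → 0 ≤ u t)
    (hu_deriv : ∀ t, 0 ≤ t → HasDerivAt u (u' t) t)
    (hineq : ∀ t, 0 ≤ t → u' t ≤ -lam * (u t)^m + (φ t)^m)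
    (hφ_nonneg : ∀ t, 0 ≤ t → 0 ≤ φ t)
    (hφ_cont : Continuous φ)
    (hφ_mono : MonotoneOn φ (Set.Ici 0)) :
    ∀ t, 0 ≤ t → u t ≤ u 0 + 2 * lam ^ (-(1:ℝ)/m) * φ t := by
  intro t ht
  have hm0 : (m : ℝ) ≠ 0 := Nat.cast_ne_zero.mpr (by omega)
  set c : ℝ := lam ^ (-(1:ℝ)/m) * φ t with hc
  have hrp : (0:ℝ) < lam ^ (-(1:ℝ)/m) := Real.rpow_pos_of_pos hlam _
  have hc0 : 0 ≤ c := mul_nonneg hrp.le (hφ_nonneg t ht)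
  have hpow : (lam ^ (-(1:ℝ)/m)) ^ m = lam⁻¹ := by
    rw [← Real.rpow_natCast (lam ^ (-(1:ℝ)/m)) m, ← Real.rpow_mul hlam.le]
    rw [show (-(1:ℝ)/m) * m = -1 by field_simp, Real.rpow_neg_one]
  have hkey : lam * c ^ m = (φ t) ^ m := by
    rw [hc, mul_pow, hpow]
    field_simp
  -- derivative negative when u s > c
  have hderiv_neg : ∀ s, 0 ≤ s → s ≤ t → c < u s → u' s < 0 := by
    intro s hs hst hcs
    have h1 : u' s ≤ -lam * (u s)^m + (φ s)^m := hineq s hs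
    have h2 : (φ s)^m ≤ (φ t)^m :=
      pow_le_pow_left₀ (hφ_nonneg s hs) (hφ_mono hs ht hst) m
    have h3 : c ^ m < (u s) ^ m := pow_lt_pow_left₀ hcs hc0 (by omega)
    nlinarith
  set M : ℝ := max (u 0) c with hM
  have hu0 : 0 ≤ u 0 := hu_nonneg 0 le_rfl
  -- main claim
  have main : ∀ s, s ∈ Set.Icc (0:ℝ) t → u s ≤ M := by
    by_contra hcon
    push_neg at hcon
    obtain ⟨s, ⟨hs0, hst⟩, hMs⟩ := hcon
    set S : Set ℝ := {r ∈ Set.Icc (0:ℝ) s | u r ≤ M} with hS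
    have h0S : (0:ℝ) ∈ S := ⟨⟨le_rfl, hs0⟩, le_max_left _ _⟩
    have hSne : S.Nonempty := ⟨0, h0S⟩
    have hSbdd : BddAbove S := ⟨s, fun r hr => hr.1.2⟩
    set s0 := sSup S with hs0def
    have hs0_nonneg : 0 ≤ s0 := le_csSup hSbdd h0S
    have hs0_le : s0 ≤ s := csSup_le hSne fun r hr => hr.1.2
    -- u s0 ≤ M via closure
    have hclos : s0 ∈ closure S := csSup_mem_closure hSne hSbdd
    have hcontAt : ContinuousAt u s0 := (hu_deriv s0 hs0_nonneg).continuousAt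
    have hus0 : u s0 ≤ M := by
      haveI : (nhdsWithin s0 S).NeBot := mem_closure_iff_nhdsWithin_neBot.mp hclos
      have hcw : ContinuousWithinAt u S s0 := hcontAt.continuousWithinAt
      exact le_of_tendsto hcw (eventually_nhdsWithin_of_forall fun r hr => hr.2)
    have hs0_lt : s0 < s := by
      rcases lt_or_eq_of_le hs0_le with h | h
      · exact h
      · exfalso; rw [h] at hus0; linarith
    -- u strictly decreasing on [s0, s]
    have hanti : StrictAntiOn u (Set.Icc s0 s) := by
      apply strictAntiOn_of_deriv_neg (convex_Icc _ _)
      · intro x hx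
        exact (hu_deriv x (hs0_nonneg.trans hx.1)).continuousAt.continuousWithinAt
      · intro x hx
        rw [interior_Icc] at hx
        have hx0 : 0 ≤ x := hs0_nonneg.trans hx.1.le
        have hxt : x ≤ t := hx.2.le.trans hst
        have hxS : x ∉ S := fun hmem => absurd (le_csSup hSbdd hmem) (not_le.mpr hx.1)
        have hMx : M < u x := by
          by_contra h
          exact hxS ⟨⟨hx0, hx.2.le⟩, le_of_not_gt h⟩
        have : c < u x := (le_max_right _ _).trans_lt hMx
        rw [(hu_deriv x hx0).deriv]
        exact hderiv_neg x hx0 hxt this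
    have : u s < u s0 := hanti ⟨le_rfl, hs0_le⟩ ⟨hs0_le, le_rfl⟩ hs0_lt
    linarith [hus0, hMs]
  have hMt : u t ≤ M := main t ⟨ht, le_rfl⟩
  have : M ≤ u 0 + 2 * lam ^ (-(1:ℝ)/m) * φ t := by
    rw [hM]
    apply max_le <;> nlinarith
  linarith
end

section
/- Let E be a separable Banach space and Z an E-valued centered Gaussian random variable with characteristic functional 𝔼 e^{i⟨Z, x*⟩} = e^{-½ |T x*|²_K} for a bounded linear operator T : E* → K into a Hilbert space K. If (xₙ*) is a sequence in the closed unit ball of E* converging weak-star to x*, then |T(xₙ* - x*)|_K → 0. In particular T is compact from (E*, weak-star on bounded sets) to K, hence compact. -/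
open MeasureTheory

open Filter Topology


/-- Sequential Banach–Alaoglu: in the dual of a separable normed space, every sequence
in the closed unit ball has a subsequence converging pointwise (weak-star) to a point of
the closed unit ball. -/
lemma seq_banach_alaoglu {E : Type*} [NormedAddCommGroup E] [NormedSpace ℝ E]
    [TopologicalSpace.SeparableSpace E] (f : ℕ → StrongDual ℝ E)
    (hf : ∀ n, ‖f n‖ ≤ 1) :
    ∃ (φ : ℕ → ℕ) (x : StrongDual ℝ E), StrictMono φ ∧ ‖x‖ ≤ 1 ∧
      ∀ z : E, Tendsto (fun n => f (φ n) z) atTop (𝓝 (x z)) := by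
  haveI : Nonempty E := ⟨0⟩
  set z : ℕ → E := TopologicalSpace.denseSeq E with hzdef
  have hz : DenseRange z := TopologicalSpace.denseRange_denseSeq E
  -- the sequence of restrictions to the dense set lives in a compact subset of ℕ → ℝ
  set S : Set (ℕ → ℝ) := Set.pi Set.univ (fun k => Set.Icc (-‖z k‖) ‖z k‖) with hS
  have hScomp : IsCompact S := isCompact_univ_pi (fun k => isCompact_Icc)
  have hmem : ∀ n, (fun k => f n (z k)) ∈ S := by
    intro n
    intro k _
    have h1 : |f n (z k)| ≤ ‖z k‖ := by
      calc |f n (z k)| = ‖f n (z k)‖ := rfl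
        _ ≤ ‖f n‖ * ‖z k‖ := (f n).le_opNorm _
        _ ≤ 1 * ‖z k‖ := by gcongr; exact hf n
        _ = ‖z k‖ := one_mul _
    exact abs_le.mp h1
  obtain ⟨a, -, φ, hφ, ha⟩ := hScomp.tendsto_subseq hmem
  have hak : ∀ k, Tendsto (fun n => f (φ n) (z k)) atTop (𝓝 (a k)) := by
    intro k
    have := (continuous_apply k).continuousAt.tendsto.comp ha
    exact this
  -- Cauchy on every point of E
  have hcauchy : ∀ x : E, CauchySeq (fun n => f (φ n) x) := by
    intro x
    rw [Metric.cauchySeq_iff]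
    intro ε hε
    obtain ⟨k, hk⟩ := hz.exists_dist_lt x (by positivity : (0:ℝ) < ε / 3)
    have hck : CauchySeq (fun n => f (φ n) (z k)) := (hak k).cauchySeq
    rw [Metric.cauchySeq_iff] at hck
    obtain ⟨N, hN⟩ := hck (ε / 3) (by positivity)
    refine ⟨N, fun m hm n hn => ?_⟩
    have hbnd : ∀ j, dist (f (φ j) x) (f (φ j) (z k)) < ε / 3 := by
      intro j
      have : dist (f (φ j) x) (f (φ j) (z k)) = |f (φ j) (x - z k)| := by
        rw [Real.dist_eq, ← map_sub]
      rw [this]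
      calc |f (φ j) (x - z k)| ≤ ‖f (φ j)‖ * ‖x - z k‖ := (f (φ j)).le_opNorm _
        _ ≤ 1 * ‖x - z k‖ := by gcongr; exact hf _
        _ = dist x (z k) := by rw [one_mul, dist_eq_norm]
        _ < ε / 3 := hk
    calc dist (f (φ m) x) (f (φ n) x)
        ≤ dist (f (φ m) x) (f (φ m) (z k)) + dist (f (φ m) (z k)) (f (φ n) (z k))
          + dist (f (φ n) (z k)) (f (φ n) x) := dist_triangle4 _ _ _ _
      _ < ε / 3 + ε / 3 + ε / 3 := by
          gcongr
          · exact hbnd m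
          · exact hN m hm n hn
          · rw [dist_comm]; exact hbnd n
      _ = ε := by ring
  have hlim : ∀ x : E, ∃ l : ℝ, Tendsto (fun n => f (φ n) x) atTop (𝓝 l) :=
    fun x => cauchySeq_tendsto_of_complete (hcauchy x)
  choose L hL using hlim
  have hadd : ∀ x y : E, L (x + y) = L x + L y := by
    intro x y
    refine tendsto_nhds_unique ?_ ((hL x).add (hL y))
    have : (fun n => f (φ n) (x + y)) = fun n => f (φ n) x + f (φ n) y := by
      funext n; exact map_add _ _ _
    rw [← this]; exact hL (x + y)
  have hsmul : ∀ (c : ℝ) (x : E), L (c • x) = c • L x := by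
    intro c x
    refine tendsto_nhds_unique ?_ ((hL x).const_mul c)
    have : (fun n => f (φ n) (c • x)) = fun n => c * f (φ n) x := by
      funext n; exact map_smul _ _ _
    rw [← this]; exact hL (c • x)
  have hbound : ∀ x : E, |L x| ≤ 1 * ‖x‖ := by
    intro x
    rw [one_mul]
    refine le_of_tendsto ((hL x).abs) (Filter.Eventually.of_forall fun n => ?_)
    calc |f (φ n) x| ≤ ‖f (φ n)‖ * ‖x‖ := (f (φ n)).le_opNorm _
      _ ≤ 1 * ‖x‖ := by gcongr; exact hf _
      _ = ‖x‖ := one_mul _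
  let Llin : E →ₗ[ℝ] ℝ := { toFun := L, map_add' := hadd, map_smul' := hsmul }
  let x : StrongDual ℝ E := LinearMap.mkContinuous Llin 1 (fun v => hbound v)
  refine ⟨φ, x, hφ, ?_, fun v => hL v⟩
  exact LinearMap.mkContinuous_norm_le Llin zero_le_one (fun v => hbound v)

/-- Let Z be an E-valued centered Gaussian random variable with characteristic
functional 𝔼 e^{i⟨Z,x*⟩} = e^{-½‖T x*‖²} for a bounded operator T : E* → K into a
Hilbert space K. If xₙ* are in the closed unit ball of E* and converge weak-star to
x*, then ‖T(xₙ* - x*)‖ → 0; in particular T is a compact operator. -/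
theorem gaussian_covariance_operator_compact
    {E : Type*} [NormedAddCommGroup E] [NormedSpace ℝ E] [CompleteSpace E]
    [TopologicalSpace.SeparableSpace E]
    {K : Type*} [NormedAddCommGroup K] [InnerProductSpace ℝ K] [CompleteSpace K]
    {Ω : Type*} [MeasureSpace Ω] (P : Measure Ω) [IsProbabilityMeasure P]
    (Z : Ω → E) (hZ : AEStronglyMeasurable Z P)
    (T : StrongDual ℝ E →L[ℝ] K)
    (hchar : ∀ f : StrongDual ℝ E,
      (∫ ω, Complex.exp (Complex.I * (f (Z ω) : ℂ)) ∂P)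
        = Complex.exp (-(1/2 : ℂ) * (‖T f‖^2 : ℝ))) :
    (∀ (xs : ℕ → StrongDual ℝ E) (x : StrongDual ℝ E),
      (∀ n, ‖xs n‖ ≤ 1) →
      (∀ z : E, Filter.Tendsto (fun n => xs n z) Filter.atTop (nhds (x z))) →
      Filter.Tendsto (fun n => ‖T (xs n - x)‖) Filter.atTop (nhds 0)) ∧
    IsCompactOperator T := by
  have part1 : ∀ (xs : ℕ → StrongDual ℝ E) (x : StrongDual ℝ E),
      (∀ z : E, Tendsto (fun n => xs n z) atTop (𝓝 (x z))) →
      Tendsto (fun n => ‖T (xs n - x)‖) atTop (𝓝 0) := by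
    intro xs x hconv
    -- pointwise convergence of the integrands
    have hpt : ∀ ω : Ω, Tendsto (fun n => Complex.exp (Complex.I * ((xs n - x) (Z ω) : ℂ)))
        atTop (𝓝 1) := by
      intro ω
      have h0 : Tendsto (fun n => (xs n - x) (Z ω)) atTop (𝓝 0) := by
        have := (hconv (Z ω)).sub_const (x (Z ω))
        simpa using this
      have hcont : Tendsto (fun t : ℝ => Complex.exp (Complex.I * (t : ℂ))) (𝓝 0) (𝓝 1) := by
        have : Continuous (fun t : ℝ => Complex.exp (Complex.I * (t : ℂ))) := by
          continuity
        have h := this.tendsto 0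
        simpa using h
      exact hcont.comp h0
    have hmeas : ∀ n, AEStronglyMeasurable
        (fun ω => Complex.exp (Complex.I * ((xs n - x) (Z ω) : ℂ))) P := by
      intro n
      have hc : Continuous (fun e : E => Complex.exp (Complex.I * ((xs n - x) e : ℂ))) := by
        continuity
      exact hc.comp_aestronglyMeasurable hZ
    have hDCT : Tendsto (fun n => ∫ ω, Complex.exp (Complex.I * ((xs n - x) (Z ω) : ℂ)) ∂P)
        atTop (𝓝 (∫ _ω, (1 : ℂ) ∂P)) := by
      refine tendsto_integral_of_dominated_convergence (fun _ => 1) hmeas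
        (integrable_const 1) ?_ ?_
      · intro n
        refine Filter.Eventually.of_forall fun ω => ?_
        simp [Complex.norm_exp]
      · exact Filter.Eventually.of_forall fun ω => hpt ω
    have hint1 : (∫ _ω, (1 : ℂ) ∂P) = 1 := by simp
    rw [hint1] at hDCT
    have hchar' : Tendsto (fun n => Complex.exp (-(1/2 : ℂ) * (‖T (xs n - x)‖^2 : ℝ)))
        atTop (𝓝 1) := by
      have : (fun n => Complex.exp (-(1/2 : ℂ) * (‖T (xs n - x)‖^2 : ℝ)))
          = fun n => ∫ ω, Complex.exp (Complex.I * ((xs n - x) (Z ω) : ℂ)) ∂P := by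
        funext n; rw [hchar (xs n - x)]
      rw [this]; exact hDCT
    -- pass to a real statement
    have hre : Tendsto (fun n => Real.exp (-(1/2) * ‖T (xs n - x)‖^2)) atTop (𝓝 1) := by
      have hcast : ∀ n, Complex.exp (-(1/2 : ℂ) * (‖T (xs n - x)‖^2 : ℝ))
          = ((Real.exp (-(1/2) * ‖T (xs n - x)‖^2) : ℝ) : ℂ) := by
        intro n
        rw [Complex.ofReal_exp]
        norm_num
      have h2 : Tendsto (fun n => ((Real.exp (-(1/2) * ‖T (xs n - x)‖^2) : ℝ) : ℂ))
          atTop (𝓝 1) := by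
        have := hchar'
        simp_rw [hcast] at this
        exact this
      have h3 := (Complex.continuous_re.tendsto 1).comp h2
      simp only [Function.comp_def, Complex.ofReal_re, Complex.one_re] at h3
      exact h3
    have hlog : Tendsto (fun n => -(1/2) * ‖T (xs n - x)‖^2) atTop (𝓝 0) := by
      have hcl : ContinuousAt Real.log 1 := Real.continuousAt_log one_ne_zero
      have h4 := hcl.tendsto.comp hre
      simp only [Function.comp_def, Real.log_exp, Real.log_one] at h4
      exact h4
    have hsq : Tendsto (fun n => ‖T (xs n - x)‖^2) atTop (𝓝 0) := by
      have := hlog.const_mul (-2)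
      simp only [neg_mul, mul_neg, neg_neg, mul_zero] at this
      convert this using 2 with n
      ring
    have := (Real.continuous_sqrt.tendsto 0).comp hsq
    simp only [Function.comp_def, Real.sqrt_zero] at this
    convert this using 2 with n
    rw [Real.sqrt_sq (norm_nonneg _)]
  refine ⟨fun xs x _ h => part1 xs x h, ?_⟩
  -- compactness of T
  have hseq : IsSeqCompact (T '' Metric.closedBall 0 1) := by
    intro y hy
    choose g hg hgy using hy
    have hgball : ∀ n, ‖g n‖ ≤ 1 := by
      intro n
      have := hg n
      simpa [Metric.mem_closedBall, dist_eq_norm] using this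
    obtain ⟨φ, x, hφ, hx, hpt⟩ := seq_banach_alaoglu g hgball
    refine ⟨T x, ⟨x, by simpa [Metric.mem_closedBall, dist_eq_norm] using hx, rfl⟩, φ, hφ, ?_⟩
    have hnorm : Tendsto (fun n => ‖T (g (φ n) - x)‖) atTop (𝓝 0) :=
      part1 (fun n => g (φ n)) x (fun z => hpt z)
    have : Tendsto (fun n => T (g (φ n))) atTop (𝓝 (T x)) := by
      rw [tendsto_iff_norm_sub_tendsto_zero]
      convert hnorm using 2 with n
      rw [map_sub]
    have heq : (y ∘ φ) = fun n => T (g (φ n)) := by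
      funext n; rw [Function.comp_apply, ← hgy (φ n)]
    rw [heq]
    exact this
  have hcomp : IsCompact (T '' Metric.closedBall 0 1) := hseq.isCompact
  refine ⟨T '' Metric.closedBall 0 1, hcomp, ?_⟩
  have hsub : Metric.closedBall (0 : StrongDual ℝ E) 1 ⊆
      T ⁻¹' (T '' Metric.closedBall 0 1) := fun v hv => ⟨v, hv, rfl⟩
  exact Filter.mem_of_superset (Metric.closedBall_mem_nhds 0 one_pos) hsub
end
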